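/- Let n ≥ 2 and let G_n be the simple graph on vertex set {1,…,n−1} in which distinct vertices i and j are adjacent iff i+j ≥ n. Then the number of unordered pairs of distinct non-adjacent vertices of G_n (equivalently, the number of unordered pairs {i,j} with i ≠ j and i+j < n) equals ⌊(n−2)²/4⌋. -/

import Mathlib

/-- The compressed zero divisor graph of `ℤ_{p^n}`: the simple graph on the
vertex set `{1, …, n-1}` (modelled by `Fin (n-1)`, where `i : Fin (n-1)`
represents the vertex `i+1`) in which distinct vertices `i` and `j` are
adjacent iff `i + j ≥ n`. -/
def compressedZdGraph (n : ℕ) : SimpleGraph (Fin (n - 1)) where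
  Adj i j := i ≠ j ∧ n ≤ (i : ℕ) + 1 + ((j : ℕ) + 1)
  symm := ⟨by intro i j h; exact ⟨h.1.symm, by omega⟩⟩
  loopless := ⟨by intro i h; exact h.1 rfl⟩

instance (n : ℕ) : DecidableRel (compressedZdGraph n).Adj :=
  fun i j => inferInstanceAs (Decidable (i ≠ j ∧ n ≤ (i : ℕ) + 1 + ((j : ℕ) + 1)))

open Finset in
lemma aux_diag (k : ℕ) :
    ((range (k+1) ×ˢ range (k+1)).filter
      (fun p : ℕ × ℕ => p.1 < p.2 ∧ p.1 + p.2 = k)).card = (k+1)/2 := by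
  have himg : ((range (k+1) ×ˢ range (k+1)).filter
      (fun p : ℕ × ℕ => p.1 < p.2 ∧ p.1 + p.2 = k))
      = (range ((k+1)/2)).image (fun i => (i, k - i)) := by
    ext ⟨i, j⟩
    simp only [mem_filter, mem_product, mem_range, mem_image, Prod.mk.injEq]
    constructor
    · rintro ⟨⟨hi, hj⟩, hij, hsum⟩
      exact ⟨i, by omega, rfl, by omega⟩
    · rintro ⟨a, ha, rfl, rfl⟩
      omega
  rw [himg, Finset.card_image_of_injective _ (fun a b h => by
    simpa using congrArg Prod.fst h), Finset.card_range]

open Finset in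
lemma aux_count (k : ℕ) :
    ((range k ×ˢ range k).filter
      (fun p : ℕ × ℕ => p.1 < p.2 ∧ p.1 + p.2 < k)).card = k ^ 2 / 4 := by
  induction k with
  | zero => simp
  | succ k ih =>
    have hsplit : ((range (k+1) ×ˢ range (k+1)).filter
        (fun p : ℕ × ℕ => p.1 < p.2 ∧ p.1 + p.2 < k+1))
        = ((range k ×ˢ range k).filter
            (fun p : ℕ × ℕ => p.1 < p.2 ∧ p.1 + p.2 < k))
          ∪ ((range (k+1) ×ˢ range (k+1)).filter
            (fun p : ℕ × ℕ => p.1 < p.2 ∧ p.1 + p.2 = k)) := by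
      ext ⟨i, j⟩
      simp only [mem_filter, mem_product, mem_range, mem_union]
      omega
    have hdisj : Disjoint
        ((range k ×ˢ range k).filter
            (fun p : ℕ × ℕ => p.1 < p.2 ∧ p.1 + p.2 < k))
        ((range (k+1) ×ˢ range (k+1)).filter
            (fun p : ℕ × ℕ => p.1 < p.2 ∧ p.1 + p.2 = k)) := by
      rw [Finset.disjoint_left]
      rintro ⟨i, j⟩ h1 h2
      simp only [mem_filter, mem_product, mem_range] at h1 h2
      omega
    rw [hsplit, Finset.card_union_of_disjoint hdisj, ih, aux_diag]
    rcases Nat.even_or_odd k with ⟨m, rfl⟩ | ⟨m, rfl⟩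
    · have h1 : (m + m) ^ 2 = 4 * m ^ 2 := by ring
      have h2 : (m + m + 1) ^ 2 = 4 * (m ^ 2 + m) + 1 := by ring
      omega
    · have h1 : (2 * m + 1) ^ 2 = 4 * (m ^ 2 + m) + 1 := by ring
      have h2 : (2 * m + 1 + 1) ^ 2 = 4 * (m ^ 2 + 2 * m + 1) := by ring
      omega

/-- The number of unordered pairs of distinct non-adjacent vertices of the
compressed zero divisor graph, i.e. pairs `{i, j}` with `i ≠ j` and `i + j < n`,
equals `⌊(n-2)²/4⌋`. -/
theorem card_nonadjacent_pairs (n : ℕ) (hn : 2 ≤ n) :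
    (Finset.univ.filter (fun p : Fin (n - 1) × Fin (n - 1) =>
        p.1 < p.2 ∧ ¬ (compressedZdGraph n).Adj p.1 p.2)).card = (n - 2) ^ 2 / 4 := by
  classical
  rw [← aux_count (n - 2)]
  apply Finset.card_bij (fun p _ => ((p.1 : ℕ), (p.2 : ℕ)))
  · rintro ⟨i, j⟩ hp
    simp only [Finset.mem_filter, Finset.mem_univ, true_and, compressedZdGraph,
      ne_eq, not_and, not_le] at hp
    obtain ⟨hlt, hadj⟩ := hp
    have hne : i ≠ j := Fin.ne_of_lt hlt
    have h2 : (i : ℕ) + 1 + ((j : ℕ) + 1) < n := hadj hne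
    have hij : (i : ℕ) < (j : ℕ) := hlt
    simp only [Finset.mem_filter, Finset.mem_product, Finset.mem_range]
    omega
  · rintro ⟨i, j⟩ _ ⟨i', j'⟩ _ h
    simp only [Prod.mk.injEq] at h
    exact Prod.ext (Fin.ext h.1) (Fin.ext h.2)
  · rintro ⟨a, b⟩ hb
    simp only [Finset.mem_filter, Finset.mem_product, Finset.mem_range] at hb
    obtain ⟨⟨ha, hb'⟩, hab, hsum⟩ := hb
    refine ⟨(⟨a, by omega⟩, ⟨b, by omega⟩), ?_, rfl⟩
    simp only [Finset.mem_filter, Finset.mem_univ, true_and, compressedZdGraph,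
      ne_eq, not_and, not_le]
    exact ⟨hab, fun _ => by omega⟩
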